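/- Let X be a Hilbert space over 𝕜 (𝕜 = ℝ or ℂ) with an orthonormal (Hilbert) basis (e_n)_{n∈ℕ}. A family (φ_n)_{n∈ℕ} in X is a Parseval frame for X if and only if there exists a bounded linear operator U : X → X whose adjoint U* is an isometry (‖U* f‖ = ‖f‖ for all f ∈ X) such that φ_n = U e_n for all n ∈ ℕ. -/

import Mathlib

/-- A family `φ : ℕ → X` in a Hilbert space `X` over `𝕜` is a Parseval frame if
`∑' n, |⟨x, φ n⟩|² = ‖x‖²` for every `x ∈ X`. -/
def IsParsevalFrame (𝕜 : Type*) {X : Type*} [RCLike 𝕜] [NormedAddCommGroup X]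
    [InnerProductSpace 𝕜 X] (φ : ℕ → X) : Prop :=
  ∀ x : X, ∑' n, ‖(inner 𝕜 x (φ n) : 𝕜)‖ ^ 2 = ‖x‖ ^ 2

lemma hb_tsum_sq {𝕜 X : Type*} [RCLike 𝕜] [NormedAddCommGroup X]
    [InnerProductSpace 𝕜 X] [CompleteSpace X]
    (e : HilbertBasis ℕ 𝕜 X) (f : X) :
    ∑' n, ‖(inner 𝕜 (e n) f : 𝕜)‖ ^ 2 = ‖f‖ ^ 2 := by
  have h := lp.norm_rpow_eq_tsum (p := 2) (by norm_num) (e.repr f)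
  rw [ENNReal.toReal_ofNat] at h
  simp only [Real.rpow_two] at h
  have hnorm : ‖e.repr f‖ = ‖f‖ := e.repr.norm_map f
  rw [hnorm] at h
  rw [h]
  refine tsum_congr fun n => ?_
  rw [e.repr_apply_apply]

theorem stmt2 (𝕜 X : Type*) [RCLike 𝕜] [NormedAddCommGroup X]
    [InnerProductSpace 𝕜 X] [CompleteSpace X]
    (e : HilbertBasis ℕ 𝕜 X) (φ : ℕ → X) :
    IsParsevalFrame 𝕜 φ ↔
      ∃ U : X →L[𝕜] X, (∀ f : X, ‖ContinuousLinearMap.adjoint U f‖ = ‖f‖) ∧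
        ∀ n : ℕ, φ n = U (e n) := by
  constructor
  · intro hP
    -- analysis-type isometry A with ⟪e n, A x⟫ = ⟪φ n, x⟫
    have hmem : ∀ x : X, Memℓp (fun n => (inner 𝕜 (φ n) x : 𝕜)) 2 := by
      intro x
      apply memℓp_gen
      rw [ENNReal.toReal_ofNat]
      simp only [Real.rpow_two]
      have hsum : Summable fun n => ‖(inner 𝕜 x (φ n) : 𝕜)‖ ^ 2 := by
        by_cases hx : x = 0
        · subst hx; simp [summable_zero]
        · by_contra hns
          have h0 := tsum_eq_zero_of_not_summable hns
          rw [hP x] at h0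
          exact hx (by simpa using norm_eq_zero.mp (pow_eq_zero_iff (n := 2) (by norm_num) |>.mp h0))
      refine hsum.congr fun n => ?_
      rw [norm_inner_symm]
    set c : X → lp (fun _ : ℕ => 𝕜) 2 := fun x => ⟨fun n => (inner 𝕜 (φ n) x : 𝕜), hmem x⟩ with hc
    have hcapp : ∀ x n, (c x : ∀ _ : ℕ, 𝕜) n = (inner 𝕜 (φ n) x : 𝕜) := fun x n => rfl
    have hnormA : ∀ x : X, ‖e.repr.symm (c x)‖ = ‖x‖ := by
      intro x
      rw [e.repr.symm.norm_map]
      have h := lp.norm_rpow_eq_tsum (p := 2) (by norm_num) (c x)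
      rw [ENNReal.toReal_ofNat] at h
      simp only [Real.rpow_two] at h
      have h2 : ∑' n, ‖(c x : ∀ _ : ℕ, 𝕜) n‖ ^ (2 : ℕ) = ‖x‖ ^ 2 := by
        rw [← hP x]
        refine tsum_congr fun n => ?_
        rw [hcapp, norm_inner_symm]
      rw [show ∑' (i : ℕ), ‖(c x : ∀ _ : ℕ, 𝕜) i‖ ^ (2:ℕ) = ‖x‖^2 from h2] at h
      have := congrArg Real.sqrt h
      simpa [Real.sqrt_sq, norm_nonneg] using this
    set A : X →ₗᵢ[𝕜] X :=
      { toFun := fun x => e.repr.symm (c x)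
        map_add' := by
          intro x y
          show e.repr.symm (c (x + y)) = e.repr.symm (c x) + e.repr.symm (c y)
          rw [← map_add]
          congr 1
          apply lp.ext
          funext n
          simp [hcapp, inner_add_right]
        map_smul' := by
          intro r x
          show e.repr.symm (c (r • x)) = r • e.repr.symm (c x)
          rw [← map_smul]
          congr 1
          apply lp.ext
          funext n
          simp [hcapp, inner_smul_right]
        norm_map' := hnormA } with hA
    have hAinner : ∀ (n : ℕ) (x : X), (inner 𝕜 (e n) (A x) : 𝕜) = inner 𝕜 (φ n) x := by
      intro n x
      have : e.repr (A x) n = (inner 𝕜 (e n) (A x) : 𝕜) := e.repr_apply_apply (A x) n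
      rw [← this]
      show e.repr (e.repr.symm (c x)) n = _
      rw [e.repr.apply_symm_apply]
    refine ⟨ContinuousLinearMap.adjoint A.toContinuousLinearMap, ?_, ?_⟩
    · intro f
      rw [ContinuousLinearMap.adjoint_adjoint]
      exact A.norm_map f
    · intro n
      apply ext_inner_right 𝕜
      intro y
      rw [ContinuousLinearMap.adjoint_inner_left]
      exact (hAinner n y).symm
  · rintro ⟨U, hU, hφ⟩
    intro x
    have : ∀ n, (inner 𝕜 x (φ n) : 𝕜) = inner 𝕜 (ContinuousLinearMap.adjoint U x) (e n) := by
      intro n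
      rw [hφ n, ContinuousLinearMap.adjoint_inner_left]
    calc ∑' n, ‖(inner 𝕜 x (φ n) : 𝕜)‖ ^ 2
        = ∑' n, ‖(inner 𝕜 (e n) (ContinuousLinearMap.adjoint U x) : 𝕜)‖ ^ 2 := by
          refine tsum_congr fun n => ?_
          rw [this n, norm_inner_symm]
      _ = ‖ContinuousLinearMap.adjoint U x‖ ^ 2 := hb_tsum_sq e _
      _ = ‖x‖ ^ 2 := by rw [hU x]
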